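/- Consider t² x'' + t A(t) x' + t² Q(t) x = 0 on (0,t₀) with A ∈ C¹([0,t₀)), Q ∈ C¹([0,t₀)), A(0) > 1, and Q(0) ≠ 0. Then the (unique up to scaling) bounded solution x(t) extends to a C² function on [0,t₀) with x'(0) = 0. -/

import Mathlib

open Set MeasureTheory intervalIntegral Filter

/-- `x` (with derivative `x'`) is a solution of `t² x'' + t A(t) x' + B(t) x = 0` on `(0, t₀)`. -/
def IsODESol (A B : ℝ → ℝ) (t0 : ℝ) (x x' : ℝ → ℝ) : Prop :=
  (∀ t ∈ Set.Ioo 0 t0, HasDerivAt x (x' t) t) ∧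
  (∀ t ∈ Set.Ioo 0 t0, HasDerivAt x' (-(t * A t * x' t + B t * x t) / t ^ 2) t)

set_option maxHeartbeats 2000000 in
theorem bounded_solution_C2_extension
    (t0 : ℝ) (ht0 : 0 < t0) (A Q : ℝ → ℝ)
    (hA : ContDiffOn ℝ 1 A (Set.Ico 0 t0)) (hQ : ContDiffOn ℝ 1 Q (Set.Ico 0 t0))
    (ha0 : 1 < A 0) (hQ0 : Q 0 ≠ 0)
    (x x' : ℝ → ℝ)
    (hsol : IsODESol A (fun t => t ^ 2 * Q t) t0 x x')
    (hbdd : ∃ C : ℝ, ∀ t ∈ Set.Ioo 0 t0, |x t| ≤ C) :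
    ∃ g : ℝ → ℝ, ContDiffOn ℝ 2 g (Set.Ico 0 t0) ∧
      (∀ t ∈ Set.Ioo 0 t0, g t = x t) ∧
      derivWithin g (Set.Ico 0 t0) 0 = 0 := by
  obtain ⟨hx, hx'⟩ := hsol
  obtain ⟨C, hC⟩ := hbdd
  set a := A 0 with ha_def
  have ha1 : 1 < a := ha0
  have hapos : 0 < a := by linarith
  have ha1' : (0:ℝ) < a + 1 := by linarith
  set u := t0 / 2 with hu_def
  have hu0 : 0 < u := by positivity
  have hut0 : u < t0 := by simp [hu_def]; linarith
  have hC0 : 0 ≤ C := le_trans (abs_nonneg _) (hC u ⟨hu0, hut0⟩)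
  have hsub : Icc (0:ℝ) u ⊆ Ico 0 t0 := fun s hs => ⟨hs.1, lt_of_le_of_lt hs.2 hut0⟩
  have hsub2 : Ioo (0:ℝ) t0 ⊆ Ico 0 t0 := fun s hs => ⟨le_of_lt hs.1, hs.2⟩
  have hIoomem : ∀ t ∈ Ioo (0:ℝ) t0, Ico (0:ℝ) t0 ∈ nhds t := fun t ht =>
    mem_nhds_iff.2 ⟨Ioo 0 t0, hsub2, isOpen_Ioo, ht⟩
  have hpos_mem : ∀ t ∈ Ioo (0:ℝ) t0, Ioi (0:ℝ) ∈ nhds t := fun t ht =>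
    Ioi_mem_nhds ht.1
  -- continuity of data at interior points
  have hAat : ∀ t ∈ Ioo (0:ℝ) t0, ContinuousAt A t := fun t ht =>
    (hA.continuousOn t (hsub2 ht)).continuousAt (hIoomem t ht)
  have hQat : ∀ t ∈ Ioo (0:ℝ) t0, ContinuousAt Q t := fun t ht =>
    (hQ.continuousOn t (hsub2 ht)).continuousAt (hIoomem t ht)
  have hxat : ∀ t ∈ Ioo (0:ℝ) t0, ContinuousAt x t := fun t ht => (hx t ht).continuousAt
  have hx'at : ∀ t ∈ Ioo (0:ℝ) t0, ContinuousAt x' t := fun t ht => (hx' t ht).continuousAt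
  -- the function R with t * R t = A t - a
  obtain ⟨R, hRid, hRcont⟩ :
      ∃ R : ℝ → ℝ, (∀ t : ℝ, t ≠ 0 → R t = (A t - a) / t) ∧
        ContinuousOn R (Ico 0 t0) := by
    refine ⟨fun t => if t = 0 then derivWithin A (Set.Ico 0 t0) 0 else (A t - a) / t,
      fun t ht => by simp [ht], ?_⟩
    intro t ht
    rcases eq_or_ne t 0 with rfl | hne
    · rw [← continuousWithinAt_diff_self]
      have hd : HasDerivWithinAt A (derivWithin A (Set.Ico 0 t0) 0) (Set.Ico 0 t0) 0 :=
        ((hA.differentiableOn one_ne_zero) 0 ⟨le_refl 0, ht0⟩).hasDerivWithinAt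
      rw [hasDerivWithinAt_iff_tendsto_slope] at hd
      rw [ContinuousWithinAt, if_pos rfl]
      refine hd.congr' ?_
      filter_upwards [self_mem_nhdsWithin] with s hs
      have hs0 : s ≠ 0 := by simpa using hs.2
      simp [hs0, slope_def_field, sub_zero, ha_def]
    · have hAt : ContinuousWithinAt A (Set.Ico 0 t0) t := hA.continuousOn t ht
      have h1 : ContinuousWithinAt (fun t => (A t - a)/t) (Set.Ico 0 t0) t :=
        (hAt.sub continuousWithinAt_const).div continuousWithinAt_id hne
      refine h1.congr_of_eventuallyEq ?_ (by simp [hne])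
      filter_upwards [mem_nhdsWithin_of_mem_nhds (isOpen_compl_singleton.mem_nhds hne)] with s hs
      simp [(Set.mem_compl_singleton_iff.1 hs : s ≠ 0)]
  have hRat : ∀ t ∈ Ioo (0:ℝ) t0, ContinuousAt R t := fun t ht =>
    (hRcont t (hsub2 ht)).continuousAt (hIoomem t ht)
  obtain ⟨K, hK0, hK⟩ : ∃ K : ℝ, 0 ≤ K ∧ ∀ s ∈ Icc (0:ℝ) u, |R s| ≤ K := by
    obtain ⟨K, hK⟩ := (isCompact_Icc : IsCompact (Icc (0:ℝ) u)).exists_bound_of_continuousOn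
      (hRcont.mono hsub)
    exact ⟨max K 0, le_max_right _ _, fun s hs => le_trans (hK s hs) (le_max_left _ _)⟩
  -- the primitive I of R and the integrating-factor correction E = exp I
  obtain ⟨I, hId, hIb⟩ :
      ∃ I : ℝ → ℝ, (∀ t ∈ Ioo (0:ℝ) t0, HasDerivAt I (R t) t) ∧
        (∀ t ∈ Icc (0:ℝ) u, |I t| ≤ K * t) := by
    refine ⟨fun t => ∫ s in (0:ℝ)..t, R s, ?_, ?_⟩
    · intro t ht
      have hint : IntervalIntegrable R volume 0 t := by
        refine (hRcont.mono ?_).intervalIntegrable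
        exact (Set.uIcc_subset_Icc ⟨le_refl 0, ht.1.le⟩ ⟨ht.1.le, le_refl t⟩).trans
          (fun s hs => ⟨hs.1, lt_of_le_of_lt hs.2 ht.2⟩)
      exact integral_hasDerivAt_right hint
        (ContinuousAt.stronglyMeasurableAtFilter isOpen_Ioo hRat t ht) (hRat t ht)
    · intro t ht
      have hb : ∀ σ ∈ Set.uIoc (0:ℝ) t, ‖R σ‖ ≤ K := by
        intro σ hσ
        rw [Set.uIoc_of_le ht.1] at hσ
        exact hK σ ⟨hσ.1.le, hσ.2.trans ht.2⟩
      have := intervalIntegral.norm_integral_le_of_norm_le_const hb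
      rwa [sub_zero, abs_of_nonneg ht.1] at this
  set eK := Real.exp (K * u) with heK_def
  have heK1 : 1 ≤ eK := Real.one_le_exp (by positivity)
  have heKpos : 0 < eK := lt_of_lt_of_le one_pos heK1
  obtain ⟨E, hEpos, hEd, hEub, hElb, hE1⟩ :
      ∃ E : ℝ → ℝ, (∀ t, 0 < E t) ∧ (∀ t ∈ Ioo (0:ℝ) t0, HasDerivAt E (E t * R t) t) ∧
        (∀ t ∈ Icc (0:ℝ) u, E t ≤ eK) ∧ (∀ t ∈ Icc (0:ℝ) u, eK⁻¹ ≤ E t) ∧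
        Tendsto E (nhdsWithin 0 (Ioi (0:ℝ))) (nhds 1) := by
    refine ⟨fun t => Real.exp (I t), fun t => Real.exp_pos _, fun t ht => (hId t ht).exp,
      ?_, ?_, ?_⟩
    · intro t ht
      rw [heK_def, Real.exp_le_exp]
      calc I t ≤ |I t| := le_abs_self _
        _ ≤ K * t := hIb t ht
        _ ≤ K * u := by nlinarith [ht.2]
    · intro t ht
      rw [heK_def, ← Real.exp_neg, Real.exp_le_exp]
      have h1 : -(K * t) ≤ I t := by
        have := hIb t ht
        have := neg_abs_le (I t)
        linarith
      nlinarith [ht.2]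
    · have hI0 : Tendsto I (nhdsWithin 0 (Ioi (0:ℝ))) (nhds 0) := by
        apply squeeze_zero_norm'
        · filter_upwards [Ioo_mem_nhdsGT hu0] with t ht
          exact hIb t ⟨ht.1.le, ht.2.le⟩
        · have : Tendsto (fun t : ℝ => K * t) (nhds 0) (nhds (K * 0)) :=
            (continuous_const.mul continuous_id).tendsto 0
          simpa using this.mono_left nhdsWithin_le_nhds
      have := (Real.continuous_exp.tendsto 0).comp hI0
      rw [Real.exp_zero] at this
      exact this
  have hEat : ∀ t ∈ Ioo (0:ℝ) t0, ContinuousAt E t := fun t ht => (hEd t ht).continuousAt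
  -- bound for Q and the function f = s^a * E * Q * x
  obtain ⟨MQ, hMQ0, hMQ⟩ : ∃ MQ : ℝ, 0 ≤ MQ ∧ ∀ s ∈ Icc (0:ℝ) u, |Q s| ≤ MQ := by
    obtain ⟨K', hK'⟩ := (isCompact_Icc : IsCompact (Icc (0:ℝ) u)).exists_bound_of_continuousOn
      (hQ.continuousOn.mono hsub)
    exact ⟨max K' 0, le_max_right _ _, fun s hs => le_trans (hK' s hs) (le_max_left _ _)⟩
  set Mf := eK * (MQ * C) with hMf_def
  have hMf0 : 0 ≤ Mf := by positivity
  obtain ⟨f, hfid, hf0⟩ :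
      ∃ f : ℝ → ℝ, (∀ s : ℝ, 0 < s → f s = s ^ a * (E s * (Q s * x s))) ∧ f 0 = 0 :=
    ⟨fun s => if s ≤ 0 then 0 else s ^ a * (E s * (Q s * x s)),
      fun s hs => by simp [not_le.2 hs], by simp⟩
  have hfle : ∀ s ∈ Icc (0:ℝ) u, |f s| ≤ Mf * s ^ a := by
    intro s hs
    rcases eq_or_lt_of_le hs.1 with rfl | hspos
    · simp [hf0, Real.zero_rpow (ne_of_gt hapos)]
    · rw [hfid s hspos]
      have hsIoo : s ∈ Ioo (0:ℝ) t0 := ⟨hspos, lt_of_le_of_lt hs.2 hut0⟩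
      have h1 : |E s * (Q s * x s)| ≤ eK * (MQ * C) := by
        rw [abs_mul, abs_mul]
        have hE : |E s| ≤ eK := by rw [abs_of_pos (hEpos s)]; exact hEub s hs
        have h0 : (0:ℝ) ≤ |Q s| * |x s| := by positivity
        calc |E s| * (|Q s| * |x s|) ≤ eK * (|Q s| * |x s|) :=
              mul_le_mul_of_nonneg_right hE h0
          _ ≤ eK * (MQ * C) := by
              apply mul_le_mul_of_nonneg_left _ heKpos.le
              exact mul_le_mul (hMQ s hs) (hC s hsIoo) (abs_nonneg _) hMQ0
      rw [abs_mul, abs_of_pos (Real.rpow_pos_of_pos hspos a), hMf_def, mul_comm (s ^ a)]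
      exact mul_le_mul_of_nonneg_right h1 (Real.rpow_pos_of_pos hspos a).le
  have hfat : ∀ t ∈ Ioo (0:ℝ) t0, ContinuousAt f t := by
    intro t ht
    have hform : ContinuousAt (fun s => s ^ a * (E s * (Q s * x s))) t :=
      ((Real.continuousAt_rpow_const t a (Or.inl (ne_of_gt ht.1)))).mul
        ((hEat t ht).mul ((hQat t ht).mul (hxat t ht)))
    apply hform.congr
    filter_upwards [hpos_mem t ht] with s hs
    exact (hfid s hs).symm
  have hfco : ContinuousOn f (Icc 0 u) := by
    intro s hs
    rcases eq_or_lt_of_le hs.1 with rfl | hspos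
    · have hrp : Tendsto (fun t : ℝ => Mf * t ^ a) (nhds 0) (nhds 0) := by
        have : ContinuousAt (fun t : ℝ => t ^ a) 0 :=
          Real.continuousAt_rpow_const 0 a (Or.inr hapos.le)
        have h2 : ContinuousAt (fun t : ℝ => Mf * t ^ a) 0 := continuousAt_const.mul this
        have := h2.tendsto
        simpa [Real.zero_rpow (ne_of_gt hapos)] using this
      rw [ContinuousWithinAt, hf0]
      apply squeeze_zero_norm' _ (hrp.mono_left nhdsWithin_le_nhds)
      filter_upwards [self_mem_nhdsWithin] with t ht
      exact hfle t ht
    · exact (hfat s ⟨hspos, lt_of_le_of_lt hs.2 hut0⟩).continuousWithinAt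
  set J : ℝ → ℝ := fun t => ∫ σ in (0:ℝ)..t, f σ with hJ_def
  have hfint : ∀ s ∈ Icc (0:ℝ) u, ∀ t ∈ Icc (0:ℝ) u, IntervalIntegrable f volume s t := by
    intro s hs t ht
    exact ((hfco.mono (Set.uIcc_subset_Icc hs ht)).intervalIntegrable)
  have hrpow_cont : Continuous (fun σ : ℝ => Mf * σ ^ a) := by
    apply continuous_const.mul
    apply continuous_iff_continuousAt.2
    intro σ
    rcases eq_or_ne σ 0 with rfl | hσ
    · exact Real.continuousAt_rpow_const 0 a (Or.inr hapos.le)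
    · exact Real.continuousAt_rpow_const σ a (Or.inl hσ)
  have hJle : ∀ t ∈ Icc (0:ℝ) u, |J t| ≤ Mf * t ^ (a+1) / (a+1) := by
    intro t ht
    have hb : ∀ᵐ σ ∂(volume.restrict (Set.uIoc (0:ℝ) t)), ‖f σ‖ ≤ Mf * σ ^ a := by
      apply ae_restrict_of_forall_mem measurableSet_uIoc
      intro σ hσ
      rw [Set.uIoc_of_le ht.1] at hσ
      exact hfle σ ⟨hσ.1.le, hσ.2.trans ht.2⟩
    have h1 := intervalIntegral.norm_integral_le_abs_of_norm_le hb
      (hrpow_cont.intervalIntegrable 0 t)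
    have h2 : (∫ σ in (0:ℝ)..t, Mf * σ ^ a) = Mf * t ^ (a+1) / (a+1) := by
      rw [intervalIntegral.integral_const_mul, integral_rpow (Or.inl (by linarith : (-1:ℝ) < a))]
      rw [Real.zero_rpow (by positivity : a + 1 ≠ 0)]
      ring
    rw [hJ_def]
    have h3 : |∫ σ in (0:ℝ)..t, Mf * σ ^ a| = Mf * t ^ (a+1) / (a+1) := by
      rw [h2]
      exact abs_of_nonneg (div_nonneg (mul_nonneg hMf0 (Real.rpow_nonneg ht.1 _)) ha1'.le)
    calc |∫ σ in (0:ℝ)..t, f σ| ≤ |∫ σ in (0:ℝ)..t, Mf * σ ^ a| := h1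
      _ = Mf * t ^ (a+1) / (a+1) := h3
  -- the key integral identity for H = t^a E x'
  set c := u ^ a * E u * x' u + J u with hc_def
  have hHd : ∀ σ ∈ Ioo (0:ℝ) t0, HasDerivAt (fun t => t ^ a * E t * x' t) (-(f σ)) σ := by
    intro σ hσ
    have hσ0 : σ ≠ 0 := ne_of_gt hσ.1
    have hp : HasDerivAt (fun t : ℝ => t ^ a) (a * σ ^ (a-1)) σ :=
      Real.hasDerivAt_rpow_const (Or.inl hσ0)
    have hh := (hp.mul (hEd σ hσ)).mul (hx' σ hσ)
    refine hh.congr_deriv ?_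
    symm
    simp only [Pi.mul_apply]
    have hρ : σ ^ a = σ ^ (a-1) * σ := by
      rw [← Real.rpow_add_one hσ0 (a-1), sub_add_cancel]
    rw [hfid σ hσ.1, hRid σ hσ0, hρ]
    have hσsq : σ ^ (2:ℕ) ≠ 0 := pow_ne_zero _ hσ0
    field_simp
    ring
  have hHJ : ∀ s ∈ Ioc (0:ℝ) u, s ^ a * E s * x' s = c - J s := by
    intro s hs
    have hsu : s ≤ u := hs.2
    have hsubI : Set.uIcc s u ⊆ Ioo (0:ℝ) t0 := by
      rw [Set.uIcc_of_le hsu]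
      exact fun σ hσ => ⟨lt_of_lt_of_le hs.1 hσ.1, lt_of_le_of_lt hσ.2 hut0⟩
    have hFTC := intervalIntegral.integral_eq_sub_of_hasDerivAt
      (f := fun t => t ^ a * E t * x' t) (f' := fun σ => -(f σ))
      (fun σ hσ => hHd σ (hsubI hσ))
      (((hfco.mono (Set.uIcc_subset_Icc ⟨hs.1.le, hsu⟩ ⟨hu0.le, le_refl u⟩)).intervalIntegrable).neg)
    rw [intervalIntegral.integral_neg] at hFTC
    have hadj := intervalIntegral.integral_add_adjacent_intervals
      (hfint 0 ⟨le_refl 0, hu0.le⟩ s ⟨hs.1.le, hsu⟩)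
      (hfint s ⟨hs.1.le, hsu⟩ u ⟨hu0.le, le_refl u⟩)
    have hJs : (∫ σ in s..u, f σ) = J u - J s := by
      rw [hJ_def]; simp only; linarith [hadj]
    rw [hJs] at hFTC
    rw [hc_def]
    linarith [hFTC]
  -- boundedness forces c = 0
  have hrpow_div : Tendsto (fun s : ℝ => s ^ (1 - a)) (nhdsWithin 0 (Ioi (0:ℝ))) atTop := by
    have h1 := (tendsto_rpow_atTop (by linarith : (0:ℝ) < a - 1)).comp tendsto_inv_nhdsGT_zero
    apply h1.congr'
    filter_upwards [self_mem_nhdsWithin] with s hs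
    have hs0 : (0:ℝ) < s := hs
    show s⁻¹ ^ (a - 1) = s ^ (1 - a)
    rw [Real.inv_rpow hs0.le, ← Real.rpow_neg hs0.le]
    congr 1
    ring
  have hc : c = 0 := by
    by_contra hcne
    have hcpos : 0 < |c| := abs_pos.2 hcne
    have hψ : Tendsto (fun s : ℝ => Mf * s ^ (a+1) / (a+1)) (nhdsWithin 0 (Ioi (0:ℝ)))
        (nhds 0) := by
      have h1 : ContinuousAt (fun s : ℝ => Mf * s ^ (a+1) / (a+1)) 0 :=
        (continuousAt_const.mul
          (Real.continuousAt_rpow_const 0 (a+1) (Or.inr (by linarith)))).div_const _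
      have h1t : Tendsto (fun s : ℝ => Mf * s ^ (a+1) / (a+1)) (nhdsWithin 0 (Ioi (0:ℝ)))
          (nhds (Mf * (0:ℝ) ^ (a+1) / (a+1))) := h1.tendsto.mono_left nhdsWithin_le_nhds
      simpa [Real.zero_rpow (ne_of_gt ha1')] using h1t
    have h2 : ∀ᶠ s : ℝ in nhdsWithin 0 (Ioi (0:ℝ)), s ∈ Ioo (0:ℝ) u :=
      eventually_of_mem (Ioo_mem_nhdsGT hu0) (fun s hs => hs)
    obtain ⟨s₁, hs₁b, hs₁⟩ :=
      ((hψ.eventually_lt_const (by linarith : (0:ℝ) < |c|/2)).and h2).exists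
    have hs₁0 : 0 < s₁ := hs₁.1
    have hJs : ∀ s ∈ Ioc (0:ℝ) s₁, |J s| ≤ |c|/2 := by
      intro s hsm
      have h3 : s ^ (a+1) ≤ s₁ ^ (a+1) := Real.rpow_le_rpow hsm.1.le hsm.2 (by linarith)
      have h5 := hJle s ⟨hsm.1.le, hsm.2.trans hs₁.2.le⟩
      have h4 : Mf * s ^ (a+1) / (a+1) ≤ Mf * s₁ ^ (a+1) / (a+1) := by gcongr
      linarith
    have hHb : ∀ s ∈ Ioc (0:ℝ) s₁, |s ^ a * E s * x' s - c| ≤ |c|/2 := by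
      intro s hsm
      rw [hHJ s ⟨hsm.1, hsm.2.trans hs₁.2.le⟩]
      have h6 : c - J s - c = -(J s) := by ring
      rw [h6, abs_neg]
      exact hJs s hsm
    have key : ∀ y y' : ℝ → ℝ, (∀ t ∈ Ioo (0:ℝ) t0, HasDerivAt y (y' t) t) →
        (∀ t ∈ Ioo (0:ℝ) t0, |y t| ≤ C) →
        (∀ t ∈ Ioo (0:ℝ) t0, ContinuousAt y' t) →
        (∀ s ∈ Ioc (0:ℝ) s₁, (|c|/2) / (s ^ a * eK) ≤ y' s) → False := by
      intro y y' hy hyC hy'c hy'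
      set k := (|c|/2) / eK with hk_def
      have hk0 : 0 < k := div_pos (by linarith) heKpos
      have ha1'' : (0:ℝ) < a - 1 := by linarith
      have hbnd : ∀ s ∈ Ioo (0:ℝ) s₁, k * ((s ^ (1-a) - s₁ ^ (1-a))/(a-1)) ≤ 2*C := by
        intro s hsm
        have hss₁ : s < s₁ := hsm.2
        have hs0 : 0 < s := hsm.1
        have hsubI : Set.uIcc s s₁ ⊆ Ioo (0:ℝ) t0 := by
          rw [Set.uIcc_of_le hss₁.le]
          exact fun σ hσ => ⟨lt_of_lt_of_le hs0 hσ.1,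
            lt_of_le_of_lt (hσ.2.trans hs₁.2.le) hut0⟩
        have hyint : IntervalIntegrable y' volume s s₁ :=
          ContinuousOn.intervalIntegrable
            (fun σ hσ => ((hy'c σ (hsubI hσ)).continuousWithinAt))
        have hrint : IntervalIntegrable (fun σ : ℝ => k * σ ^ (-a)) volume s s₁ := by
          apply ContinuousOn.intervalIntegrable
          intro σ hσ
          have hσ0 : σ ≠ 0 := ne_of_gt (hsubI hσ).1
          exact (continuousAt_const.mul
            (Real.continuousAt_rpow_const σ (-a) (Or.inl hσ0))).continuousWithinAt
        have hFTC := intervalIntegral.integral_eq_sub_of_hasDerivAt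
          (f := y) (f' := y') (fun σ hσ => hy σ (hsubI hσ)) hyint
        have hptw : ∀ σ ∈ Icc s s₁, k * σ ^ (-a) ≤ y' σ := by
          intro σ hσ
          have hσ0 : 0 < σ := lt_of_lt_of_le hs0 hσ.1
          have h7 := hy' σ ⟨hσ0, hσ.2⟩
          have h8 : k * σ ^ (-a) = (|c|/2) / (σ ^ a * eK) := by
            rw [Real.rpow_neg hσ0.le, hk_def, mul_comm (σ ^ a) eK, ← div_div]
            ring
          linarith
        have hmono := intervalIntegral.integral_mono_on hss₁.le hrint hyint hptw
        have hval : (∫ σ in s..s₁, k * σ ^ (-a))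
            = k * ((s ^ (1-a) - s₁ ^ (1-a))/(a-1)) := by
          rw [intervalIntegral.integral_const_mul,
            integral_rpow (Or.inr ⟨fun h => (by linarith : a ≠ 1) (by linarith [neg_inj.1 h]),
              by intro h; rw [Set.uIcc_of_le hss₁.le] at h; exact absurd h.1 (not_le.2 hs0)⟩)]
          rw [show -a + 1 = 1 - a by ring]
          have h1a : (1:ℝ) - a ≠ 0 := by intro h; exact (by linarith : a ≠ 1) (by linarith)
          have ha1ne : a - (1:ℝ) ≠ 0 := by intro h; exact (by linarith : a ≠ 1) (by linarith)
          field_simp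
          ring
        rw [hFTC, hval] at hmono
        have hb1 : |y s₁| ≤ C := hyC s₁ ⟨hs₁0, lt_trans hs₁.2 hut0⟩
        have hb2 : |y s| ≤ C := hyC s ⟨hs0, lt_trans (hss₁.trans hs₁.2) hut0⟩
        cases abs_le.1 hb1 with
        | intro hb1a hb1b =>
        cases abs_le.1 hb2 with
        | intro hb2a hb2b =>
        linarith
      obtain ⟨s, hsgt, hsm⟩ :=
        ((hrpow_div.eventually_gt_atTop (s₁ ^ (1-a) + 2*C*(a-1)/k)).and
          (eventually_of_mem (Ioo_mem_nhdsGT hs₁0) (fun s hs => hs))).exists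
      have hbnds := hbnd s hsm
      have h7 : 2*C*(a-1)/k < s ^ (1-a) - s₁ ^ (1-a) := by linarith
      have h8 : 2*C*(a-1) < k * (s ^ (1-a) - s₁ ^ (1-a)) := (div_lt_iff₀' hk0).1 h7
      have h9 : k * (s ^ (1-a) - s₁ ^ (1-a)) ≤ 2*C*(a-1) := by
        have h10 := mul_le_mul_of_nonneg_right hbnds (le_of_lt ha1'')
        calc k * (s ^ (1-a) - s₁ ^ (1-a))
            = k * ((s ^ (1-a) - s₁ ^ (1-a))/(a-1)) * (a-1) := by field_simp
          _ ≤ 2*C*(a-1) := h10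
      linarith
    rcases lt_or_gt_of_ne hcne with hneg | hpos
    · apply key (fun t => -x t) (fun t => -x' t) (fun t ht => (hx t ht).neg)
        (fun t ht => by rw [abs_neg]; exact hC t ht)
        (fun t ht => (hx'at t ht).neg)
      intro s hsm
      have hH := hHb s hsm
      have hPE : 0 < s ^ a * E s := mul_pos (Real.rpow_pos_of_pos hsm.1 a) (hEpos s)
      have habs : |c| = -c := abs_of_neg hneg
      have h1 : s ^ a * E s * x' s ≤ -(|c|/2) := by
        cases abs_le.1 hH with
        | intro hHa hHb' => linarith
      have hden : s ^ a * E s ≤ s ^ a * eK :=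
        mul_le_mul_of_nonneg_left (hEub s ⟨hsm.1.le, hsm.2.trans hs₁.2.le⟩)
          (Real.rpow_nonneg hsm.1.le a)
      have hden2 : 0 < s ^ a * eK := mul_pos (Real.rpow_pos_of_pos hsm.1 a) heKpos
      show (|c|/2) / (s ^ a * eK) ≤ -x' s
      rw [div_le_iff₀ hden2]
      have h3 : (|c|/2) ≤ -x' s * (s ^ a * E s) := by
        have heq : -x' s * (s ^ a * E s) = -(s ^ a * E s * x' s) := by ring
        linarith
      have h4 : 0 < -x' s := by
        by_contra hcon
        push_neg at hcon
        have := mul_nonpos_of_nonpos_of_nonneg hcon hPE.le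
        linarith
      have h5 : -x' s * (s ^ a * E s) ≤ -x' s * (s ^ a * eK) :=
        mul_le_mul_of_nonneg_left hden h4.le
      linarith
    · apply key x x' hx hC hx'at
      intro s hsm
      have hH := hHb s hsm
      have hPE : 0 < s ^ a * E s := mul_pos (Real.rpow_pos_of_pos hsm.1 a) (hEpos s)
      have habs : |c| = c := abs_of_pos hpos
      have h1 : (|c|/2) ≤ s ^ a * E s * x' s := by
        cases abs_le.1 hH with
        | intro hHa hHb' => linarith
      have hden : s ^ a * E s ≤ s ^ a * eK :=
        mul_le_mul_of_nonneg_left (hEub s ⟨hsm.1.le, hsm.2.trans hs₁.2.le⟩)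
          (Real.rpow_nonneg hsm.1.le a)
      have hden2 : 0 < s ^ a * eK := mul_pos (Real.rpow_pos_of_pos hsm.1 a) heKpos
      rw [div_le_iff₀ hden2]
      have h3 : (|c|/2) ≤ x' s * (s ^ a * E s) := by
        have heq : x' s * (s ^ a * E s) = s ^ a * E s * x' s := by ring
        linarith
      have h4 : 0 < x' s := by
        by_contra hcon
        push_neg at hcon
        have := mul_nonpos_of_nonpos_of_nonneg hcon hPE.le
        linarith
      have h5 : x' s * (s ^ a * E s) ≤ x' s * (s ^ a * eK) :=
        mul_le_mul_of_nonneg_left hden h4.le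
      linarith
  -- hence a linear bound on x'
  set M₁ := Mf * eK / (a+1) with hM₁_def
  have hM₁0 : 0 ≤ M₁ := by positivity
  have hx'J : ∀ s ∈ Ioc (0:ℝ) u, x' s = -(J s) / (s ^ a * E s) := by
    intro s hs
    have h1 : s ^ a * E s * x' s = -(J s) := by rw [hHJ s hs, hc]; ring
    have h2 : s ^ a * E s ≠ 0 :=
      ne_of_gt (mul_pos (Real.rpow_pos_of_pos hs.1 a) (hEpos s))
    field_simp at h1 ⊢
    rw [← neg_div, eq_div_iff h2]
    linarith [h1]
  have hx'le : ∀ s ∈ Ioc (0:ℝ) u, |x' s| ≤ M₁ * s := by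
    intro s hs
    have hP : (0:ℝ) < s ^ a := Real.rpow_pos_of_pos hs.1 a
    have hPE : 0 < s ^ a * E s := mul_pos hP (hEpos s)
    have hEinv : (E s)⁻¹ ≤ eK := by
      rw [← inv_inv eK]
      exact inv_anti₀ (by positivity) (hElb s ⟨hs.1.le, hs.2⟩)
    have hJb : |J s| ≤ Mf * (s ^ a * s) / (a+1) := by
      have := hJle s ⟨hs.1.le, hs.2⟩
      rwa [Real.rpow_add_one (ne_of_gt hs.1) a] at this
    calc |x' s| = |J s| * (s ^ a * E s)⁻¹ := by
          rw [hx'J s hs, abs_div, abs_neg, abs_of_pos hPE, div_eq_mul_inv]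
      _ ≤ (Mf * (s ^ a * s) / (a+1)) * (s ^ a * E s)⁻¹ := by
          exact mul_le_mul_of_nonneg_right hJb (by positivity)
      _ = (Mf * s / (a+1)) * (E s)⁻¹ := by
          rw [mul_inv]
          have hcan : s ^ a * (s ^ a)⁻¹ = 1 := mul_inv_cancel₀ (ne_of_gt hP)
          calc Mf * (s ^ a * s) / (a+1) * ((s ^ a)⁻¹ * (E s)⁻¹)
              = (Mf * s / (a+1)) * (E s)⁻¹ * (s ^ a * (s ^ a)⁻¹) := by ring
            _ = (Mf * s / (a+1)) * (E s)⁻¹ := by rw [hcan, mul_one]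
      _ ≤ (Mf * s / (a+1)) * eK := by
          apply mul_le_mul_of_nonneg_left hEinv
          have : 0 ≤ Mf * s := mul_nonneg hMf0 hs.1.le
          positivity
      _ = M₁ * s := by rw [hM₁_def]; ring
  -- the candidate first derivative g1, and the limit x0 of x at 0
  set g1 : ℝ → ℝ := fun t => if t ≤ 0 then 0 else x' t with hg1_def
  have hg1le : ∀ s ∈ Icc (0:ℝ) u, |g1 s| ≤ M₁ * s := by
    intro s hs
    rcases eq_or_lt_of_le hs.1 with rfl | hspos
    · simp [hg1_def]
    · rw [hg1_def]
      simp only [not_le.2 hspos, if_false]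
      exact hx'le s ⟨hspos, hs.2⟩
  have hg1at : ∀ t ∈ Ioo (0:ℝ) t0, ContinuousAt g1 t := by
    intro t ht
    apply (hx'at t ht).congr
    filter_upwards [hpos_mem t ht] with s hs
    rw [hg1_def]
    simp [not_le.2 (Set.mem_Ioi.1 hs)]
  have hg1co : ContinuousOn g1 (Icc 0 u) := by
    intro s hs
    rcases eq_or_lt_of_le hs.1 with rfl | hspos
    · have hrp : Tendsto (fun t : ℝ => M₁ * t) (nhds 0) (nhds 0) := by
        have h2 : ContinuousAt (fun t : ℝ => M₁ * t) 0 := continuousAt_const.mul continuousAt_id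
        simpa using h2.tendsto
      have hg10 : g1 0 = 0 := by rw [hg1_def]; simp
      rw [ContinuousWithinAt, hg10]
      apply squeeze_zero_norm' _ (hrp.mono_left nhdsWithin_le_nhds)
      filter_upwards [self_mem_nhdsWithin] with t ht
      exact hg1le t ht
    · exact (hg1at s ⟨hspos, lt_of_le_of_lt hs.2 hut0⟩).continuousWithinAt
  set x0 := x u - ∫ s in (0:ℝ)..u, g1 s with hx0_def
  have hg1int : ∀ s ∈ Icc (0:ℝ) u, ∀ t ∈ Icc (0:ℝ) u, IntervalIntegrable g1 volume s t :=
    fun s hs t ht => (hg1co.mono (Set.uIcc_subset_Icc hs ht)).intervalIntegrable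
  have hxid : ∀ t ∈ Ioc (0:ℝ) u, x t = x0 + ∫ s in (0:ℝ)..t, g1 s := by
    intro t ht
    have hsubI : Set.uIcc t u ⊆ Ioo (0:ℝ) t0 := by
      rw [Set.uIcc_of_le ht.2]
      exact fun σ hσ => ⟨lt_of_lt_of_le ht.1 hσ.1, lt_of_le_of_lt hσ.2 hut0⟩
    have hFTC := intervalIntegral.integral_eq_sub_of_hasDerivAt
      (f := x) (f' := x') (fun σ hσ => hx σ (hsubI hσ))
      (ContinuousOn.intervalIntegrable
        (fun σ hσ => (hx'at σ (hsubI hσ)).continuousWithinAt))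
    have hcongr : (∫ σ in t..u, x' σ) = ∫ σ in t..u, g1 σ := by
      apply intervalIntegral.integral_congr
      intro σ hσ
      have hσpos : 0 < σ := lt_of_lt_of_le ht.1 ((Set.uIcc_of_le ht.2 ▸ hσ).1)
      rw [hg1_def]
      simp [not_le.2 hσpos]
    have hadj := intervalIntegral.integral_add_adjacent_intervals
      (hg1int 0 ⟨le_refl 0, hu0.le⟩ t ⟨ht.1.le, ht.2⟩)
      (hg1int t ⟨ht.1.le, ht.2⟩ u ⟨hu0.le, le_refl u⟩)
    rw [hx0_def]
    rw [hcongr] at hFTC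
    linarith [hFTC, hadj]
  have hxnear : ∀ t ∈ Ioc (0:ℝ) u, |x t - x0| ≤ M₁ * t * t := by
    intro t ht
    have hb : ∀ σ ∈ Set.uIoc (0:ℝ) t, ‖g1 σ‖ ≤ M₁ * t := by
      intro σ hσ
      rw [Set.uIoc_of_le ht.1.le] at hσ
      calc ‖g1 σ‖ ≤ M₁ * σ := hg1le σ ⟨hσ.1.le, hσ.2.trans ht.2⟩
        _ ≤ M₁ * t := mul_le_mul_of_nonneg_left hσ.2 hM₁0
    have h1 := intervalIntegral.norm_integral_le_of_norm_le_const hb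
    rw [sub_zero, abs_of_nonneg ht.1.le] at h1
    have h2 : x t - x0 = ∫ σ in (0:ℝ)..t, g1 σ := by rw [hxid t ht]; ring
    rw [h2]
    exact h1
  have hev_u : ∀ᶠ t : ℝ in nhdsWithin 0 (Ioo (0:ℝ) t0), t ∈ Ioc (0:ℝ) u := by
    have h1 : Iio u ∈ nhds (0:ℝ) := Iio_mem_nhds hu0
    filter_upwards [eventually_nhdsWithin_of_eventually_nhds
      (eventually_of_mem h1 (fun s hs => hs)), self_mem_nhdsWithin] with t ht1 ht2
    exact ⟨ht2.1, le_of_lt ht1⟩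
  have hxt : Tendsto x (nhdsWithin 0 (Ioo (0:ℝ) t0)) (nhds x0) := by
    have h1 : Tendsto (fun t => x t - x0) (nhdsWithin 0 (Ioo (0:ℝ) t0)) (nhds 0) := by
      apply squeeze_zero_norm'
      · filter_upwards [hev_u] with t ht
        exact hxnear t ht
      · have h2 : ContinuousAt (fun t : ℝ => M₁ * t * t) 0 :=
          (continuousAt_const.mul continuousAt_id).mul continuousAt_id
        have h3 := h2.tendsto.mono_left (nhdsWithin_le_nhds
          (s := Ioo (0:ℝ) t0) (a := (0:ℝ)))
        simpa using h3
    have h4 := h1.add_const x0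
    simp only [sub_add_cancel, zero_add] at h4
    exact h4
  set q := Q 0 * x0 with hq_def
  set L := -q / (a+1) with hL_def
  have hQ0t : Tendsto Q (nhdsWithin 0 (Ioo (0:ℝ) t0)) (nhds (Q 0)) :=
    (hQ.continuousOn 0 ⟨le_refl 0, ht0⟩).mono_left (nhdsWithin_mono 0 hsub2)
  have hEt : Tendsto E (nhdsWithin 0 (Ioo (0:ℝ) t0)) (nhds 1) :=
    hE1.mono_left (nhdsWithin_mono 0 Set.Ioo_subset_Ioi_self)
  have hEQx : Tendsto (fun s => E s * (Q s * x s)) (nhdsWithin 0 (Ioo (0:ℝ) t0))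
      (nhds q) := by
    have h1 := hEt.mul (hQ0t.mul hxt)
    rw [one_mul] at h1
    exact h1
  have hrc : ∀ b : ℝ, Continuous (fun σ : ℝ => b * σ ^ a) := by
    intro b
    apply continuous_const.mul
    apply continuous_iff_continuousAt.2
    intro σ
    rcases eq_or_ne σ 0 with rfl | hσ
    · exact Real.continuousAt_rpow_const 0 a (Or.inr hapos.le)
    · exact Real.continuousAt_rpow_const σ a (Or.inl hσ)
  have hrval : ∀ b : ℝ, ∀ t : ℝ, 0 ≤ t → (∫ σ in (0:ℝ)..t, b * σ ^ a)
      = b * t ^ (a+1) / (a+1) := by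
    intro b t ht
    rw [intervalIntegral.integral_const_mul, integral_rpow (Or.inl (by linarith : (-1:ℝ) < a))]
    rw [Real.zero_rpow (by positivity : a + 1 ≠ 0)]
    ring
  have hJlim : Tendsto (fun t => J t / t ^ (a+1)) (nhdsWithin 0 (Ioo (0:ℝ) t0))
      (nhds (q/(a+1))) := by
    rw [Metric.tendsto_nhdsWithin_nhds]
    intro ε hε
    obtain ⟨δ₁, hδ₁0, hδ₁⟩ := Metric.tendsto_nhdsWithin_nhds.1 hEQx (ε/2) (by linarith)
    refine ⟨min δ₁ u, by positivity, ?_⟩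
    intro t htIoo hdist
    have htpos : 0 < t := htIoo.1
    have htd : t < δ₁ := by
      have := lt_of_lt_of_le hdist (min_le_left δ₁ u)
      rwa [Real.dist_eq, sub_zero, abs_of_pos htpos] at this
    have htu : t ≤ u := by
      have := lt_of_lt_of_le hdist (min_le_right δ₁ u)
      rw [Real.dist_eq, sub_zero, abs_of_pos htpos] at this
      exact this.le
    have hT : (0:ℝ) < t ^ (a+1) := Real.rpow_pos_of_pos htpos _
    have hptw : ∀ᵐ σ ∂(volume.restrict (Set.uIoc (0:ℝ) t)),
        ‖f σ - q * σ ^ a‖ ≤ (ε/2) * σ ^ a := by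
      apply ae_restrict_of_forall_mem measurableSet_uIoc
      intro σ hσ
      rw [Set.uIoc_of_le htpos.le] at hσ
      have hσpos : 0 < σ := hσ.1
      have hσIoo : σ ∈ Ioo (0:ℝ) t0 := ⟨hσpos, lt_of_le_of_lt (hσ.2.trans htu) hut0⟩
      have hσd : dist σ 0 < δ₁ := by
        rw [Real.dist_eq, sub_zero, abs_of_pos hσpos]
        exact lt_of_le_of_lt hσ.2 htd
      have h2 := (hδ₁ hσIoo hσd).le
      rw [Real.dist_eq] at h2
      have h3 : f σ - q * σ ^ a = σ ^ a * (E σ * (Q σ * x σ) - q) := by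
        rw [hfid σ hσpos]; ring
      rw [h3, Real.norm_eq_abs, abs_mul, abs_of_pos (Real.rpow_pos_of_pos hσpos a),
        mul_comm]
      exact mul_le_mul_of_nonneg_right h2 (Real.rpow_pos_of_pos hσpos a).le
    have hint1 : IntervalIntegrable f volume 0 t := hfint 0 ⟨le_refl 0, hu0.le⟩ t ⟨htpos.le, htu⟩
    have hint2 : IntervalIntegrable (fun σ : ℝ => q * σ ^ a) volume 0 t :=
      (hrc q).intervalIntegrable 0 t
    have hsubint : (∫ σ in (0:ℝ)..t, (f σ - q * σ ^ a))
        = J t - q * t ^ (a+1) / (a+1) := by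
      rw [intervalIntegral.integral_sub hint1 hint2, hrval q t htpos.le]
    have hnorm := intervalIntegral.norm_integral_le_abs_of_norm_le hptw
      ((hrc (ε/2)).intervalIntegrable 0 t)
    rw [hsubint] at hnorm
    have hval2 : |∫ σ in (0:ℝ)..t, (ε/2) * σ ^ a| = (ε/2) * t ^ (a+1) / (a+1) := by
      rw [hrval (ε/2) t htpos.le]
      exact abs_of_nonneg (by positivity)
    rw [Real.norm_eq_abs] at hnorm
    have hbound : |J t - q * t ^ (a+1) / (a+1)| ≤ (ε/2) * t ^ (a+1) / (a+1) := by
      calc |J t - q * t ^ (a+1) / (a+1)| ≤ |∫ σ in (0:ℝ)..t, (ε/2) * σ ^ a| := hnorm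
        _ = (ε/2) * t ^ (a+1) / (a+1) := hval2
    have heq : J t / t ^ (a+1) - q/(a+1) = (J t - q * t ^ (a+1) / (a+1)) / t ^ (a+1) := by
      field_simp
    rw [Real.dist_eq, heq, abs_div, abs_of_pos hT]
    rw [div_lt_iff₀ hT]
    calc |J t - q * t ^ (a+1) / (a+1)| ≤ (ε/2) * t ^ (a+1) / (a+1) := hbound
      _ ≤ (ε/2) * t ^ (a+1) := by
          apply div_le_self (by positivity) (by linarith)
      _ < ε * t ^ (a+1) := by
          have : (0:ℝ) < ε * t ^ (a+1) := by positivity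
          nlinarith
  have hslope : Tendsto (fun t => x' t / t) (nhdsWithin 0 (Ioo (0:ℝ) t0)) (nhds L) := by
    have h1 : Tendsto (fun t => -(J t / t ^ (a+1)) / E t) (nhdsWithin 0 (Ioo (0:ℝ) t0))
        (nhds (-(q/(a+1)) / 1)) := (hJlim.neg).div hEt one_ne_zero
    rw [div_one] at h1
    have hLval : -(q/(a+1)) = L := by rw [hL_def]; ring
    rw [hLval] at h1
    apply h1.congr'
    filter_upwards [hev_u] with t ht
    have htpos : 0 < t := ht.1
    have hP : (0:ℝ) < t ^ a := Real.rpow_pos_of_pos htpos a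
    rw [hx'J t ht, Real.rpow_add_one (ne_of_gt htpos) a]
    ring
  -- the extensions
  set g : ℝ → ℝ := fun t => if t ≤ 0 then x0 else x t with hg_def
  set g2 : ℝ → ℝ := fun t => if t ≤ 0 then L else -(t * A t * x' t + t^2 * Q t * x t)/t^2
    with hg2_def
  have hUD : UniqueDiffOn ℝ (Ico (0:ℝ) t0) := uniqueDiffOn_Ico 0 t0
  have hdiff : Ico (0:ℝ) t0 \ {0} = Ioo 0 t0 := Ico_diff_left
  have hgd : ∀ t ∈ Ico (0:ℝ) t0, HasDerivWithinAt g (g1 t) (Ico 0 t0) t := by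
    intro t ht
    rcases eq_or_lt_of_le ht.1 with rfl | htpos
    · have hg0 : g 0 = x0 := by rw [hg_def]; simp
      have hg10 : g1 0 = 0 := by rw [hg1_def]; simp
      rw [hasDerivWithinAt_iff_tendsto_slope, hdiff, hg10]
      have hb : ∀ᶠ s in nhdsWithin 0 (Ioo (0:ℝ) t0), ‖slope g 0 s‖ ≤ M₁ * s := by
        filter_upwards [hev_u] with s hs
        have hgs : g s = x s := by rw [hg_def]; simp [not_le.2 hs.1]
        rw [slope_def_field, hgs, hg0, sub_zero, Real.norm_eq_abs, abs_div, abs_of_pos hs.1,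
          div_le_iff₀ hs.1]
        exact hxnear s hs
      have ht' : Tendsto (fun s : ℝ => M₁ * s) (nhdsWithin 0 (Ioo (0:ℝ) t0)) (nhds 0) := by
        have h2 : ContinuousAt (fun s : ℝ => M₁ * s) 0 := continuousAt_const.mul continuousAt_id
        have h3 := h2.tendsto.mono_left
          (nhdsWithin_le_nhds (s := Ioo (0:ℝ) t0) (a := (0:ℝ)))
        simpa using h3
      exact squeeze_zero_norm' hb ht'
    · have hD := hx t ⟨htpos, ht.2⟩
      have hg1t : g1 t = x' t := by rw [hg1_def]; simp [not_le.2 htpos]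
      rw [hg1t]
      apply HasDerivAt.hasDerivWithinAt
      apply hD.congr_of_eventuallyEq
      filter_upwards [hpos_mem t ⟨htpos, ht.2⟩] with s hs
      rw [hg_def]
      simp [not_le.2 (Set.mem_Ioi.1 hs)]
  have hg1d : ∀ t ∈ Ico (0:ℝ) t0, HasDerivWithinAt g1 (g2 t) (Ico 0 t0) t := by
    intro t ht
    rcases eq_or_lt_of_le ht.1 with rfl | htpos
    · have hg20 : g2 0 = L := by rw [hg2_def]; simp
      have hg10 : g1 0 = 0 := by rw [hg1_def]; simp
      rw [hasDerivWithinAt_iff_tendsto_slope, hdiff, hg20]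
      apply hslope.congr'
      filter_upwards [self_mem_nhdsWithin] with s hs
      rw [slope_def_field, hg10, hg1_def]
      simp only [not_le.2 hs.1, if_false, sub_zero]
    · have hD := hx' t ⟨htpos, ht.2⟩
      have hg2t : g2 t = -(t * A t * x' t + t ^ 2 * Q t * x t) / t ^ 2 := by
        rw [hg2_def]; simp [not_le.2 htpos]
      rw [hg2t]
      apply HasDerivAt.hasDerivWithinAt
      have hev : x' =ᶠ[nhds t] g1 := by
        filter_upwards [hpos_mem t ⟨htpos, ht.2⟩] with s hs
        rw [hg1_def]
        simp [not_le.2 (Set.mem_Ioi.1 hs)]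
      exact (hD.congr_of_eventuallyEq hev.symm :)
  have hg2c : ContinuousOn g2 (Ico 0 t0) := by
    intro t ht
    rcases eq_or_lt_of_le ht.1 with rfl | htpos
    · rw [← continuousWithinAt_diff_self]
      have hg20 : g2 0 = L := by rw [hg2_def]; simp
      show Tendsto g2 (nhdsWithin 0 (Ico (0:ℝ) t0 \ {0})) (nhds (g2 0))
      rw [hdiff, hg20]
      have hAt : Tendsto A (nhdsWithin 0 (Ioo (0:ℝ) t0)) (nhds a) :=
        (hA.continuousOn 0 ⟨le_refl 0, ht0⟩).mono_left (nhdsWithin_mono 0 hsub2)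
      have hlim : Tendsto (fun s => -(A s * (x' s / s) + Q s * x s))
          (nhdsWithin 0 (Ioo (0:ℝ) t0)) (nhds (-(a * L + q))) := by
        have hq2 : Tendsto (fun s => Q s * x s) (nhdsWithin 0 (Ioo (0:ℝ) t0)) (nhds q) :=
          hQ0t.mul hxt
        exact ((hAt.mul hslope).add hq2).neg
      have hLval : -(a * L + q) = L := by
        rw [hL_def]
        field_simp
        ring
      rw [← hLval]
      apply hlim.congr'
      filter_upwards [self_mem_nhdsWithin] with s hs
      have hs0 : s ≠ 0 := ne_of_gt hs.1
      rw [hg2_def]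
      simp only [not_le.2 hs.1, if_false]
      field_simp
    · have hform : ContinuousAt (fun s => -(s * A s * x' s + s^2 * Q s * x s)/s^2) t := by
        apply ContinuousAt.div
        · exact (((continuousAt_id.mul (hAat t ⟨htpos, ht.2⟩)).mul
            (hx'at t ⟨htpos, ht.2⟩)).add (((continuousAt_id.pow 2).mul
            (hQat t ⟨htpos, ht.2⟩)).mul (hxat t ⟨htpos, ht.2⟩))).neg
        · exact continuousAt_id.pow 2
        · exact pow_ne_zero 2 (ne_of_gt htpos)
      apply ContinuousWithinAt.congr_of_eventuallyEq hform.continuousWithinAt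
      · filter_upwards [mem_nhdsWithin_of_mem_nhds (hpos_mem t ⟨htpos, ht.2⟩)] with s hs
        rw [hg2_def]
        simp [not_le.2 (Set.mem_Ioi.1 hs)]
      · rw [hg2_def]
        simp [not_le.2 htpos]
  refine ⟨g, ?_, fun t ht => by simp [hg_def, not_le.2 ht.1], ?_⟩
  · have h2 : (2 : WithTop ℕ∞) = 1 + 1 := by norm_num
    rw [h2, contDiffOn_succ_iff_derivWithin hUD]
    refine ⟨fun t ht => (hgd t ht).differentiableWithinAt, by simp, ?_⟩
    have hder : ∀ t ∈ Ico (0:ℝ) t0, derivWithin g (Ico 0 t0) t = g1 t := fun t ht =>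
      (hgd t ht).derivWithin (hUD t ht)
    have h1 : (1 : WithTop ℕ∞) = 0 + 1 := by norm_num
    refine ContDiffOn.congr ?_ hder
    rw [h1, contDiffOn_succ_iff_derivWithin hUD]
    refine ⟨fun t ht => (hg1d t ht).differentiableWithinAt, by simp, ?_⟩
    rw [contDiffOn_zero]
    refine ContinuousOn.congr hg2c (fun t ht => (hg1d t ht).derivWithin (hUD t ht))
  · have := (hgd 0 ⟨le_refl 0, ht0⟩).derivWithin (hUD 0 ⟨le_refl 0, ht0⟩)
    rw [this, hg1_def]
    simp
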